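/- Let u be a nonempty word of length m in an alphabet X with |X| = r > 1, and let N(u) be the set of words in the free monoid W(X) that do not contain u as a (contiguous) subword. Then there exist constants C > 0 and ε > 0 such that the number of words in N(u) of length at most n is at most C(r - ε)^n for all n ≥ 1. In particular one may take C = r^{m-1} and r - ε = (r^m - 1)^{1/m}. -/

import Mathlib

open Set

lemma ncard_length_eq' (r n : ℕ) : {w : List (Fin r) | w.length = n}.ncard = r ^ n := by
  rw [← Nat.card_coe_set_eq]
  have e : {w : List (Fin r) | w.length = n} ≃ List.Vector (Fin r) n :=
    Equiv.subtypeEquivRight (fun _ => Iff.rfl)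
  rw [Nat.card_congr e, Nat.card_eq_fintype_card, card_vector, Fintype.card_fin]

lemma ncard_prod' {α β : Type*} (s : Set α) (t : Set β) :
    (s ×ˢ t).ncard = s.ncard * t.ncard := by
  rw [← Nat.card_coe_set_eq, ← Nat.card_coe_set_eq, ← Nat.card_coe_set_eq,
    Nat.card_congr (Equiv.Set.prod s t), Nat.card_prod]

section
variable {r : ℕ} (u : List (Fin r))

def A (u : List (Fin r)) (n : ℕ) : Set (List (Fin r)) := {w | w.length = n ∧ ¬ u <:+: w}

lemma A_finite (n : ℕ) : (A u n).Finite :=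
  (List.finite_length_eq (Fin r) n).subset (fun _ hw => hw.1)

lemma A_card_le_pow (n : ℕ) : (A u n).ncard ≤ r ^ n := by
  rw [← ncard_length_eq' r n]
  exact Set.ncard_le_ncard (fun w hw => hw.1) (List.finite_length_eq (Fin r) n)

lemma A_step (n : ℕ) (hn : u.length ≤ n) :
    (A u n).ncard ≤ (r ^ u.length - 1) * (A u (n - u.length)).ncard := by
  set m := u.length with hm
  have key : (A u n).ncard ≤
      (({v : List (Fin r) | v.length = m} \ {u}) ×ˢ (A u (n - m))).ncard := by
    apply Set.ncard_le_ncard_of_injOn (fun w => (w.take m, w.drop m)) ?_ ?_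
      (((List.finite_length_eq (Fin r) m).diff).prod (A_finite u (n - m)))
    · rintro w ⟨hlen, havoid⟩
      refine ⟨⟨by simp [hlen, hn], fun h => ?_⟩, by simp [hlen], fun hinf => havoid ?_⟩
      · simp only [Set.mem_singleton_iff] at h
        exact havoid (h ▸ (w.take_prefix m).isInfix)
      · exact hinf.trans (w.drop_suffix m).isInfix
    · intro a _ b _ h
      have := congrArg (fun p : List (Fin r) × List (Fin r) => p.1 ++ p.2) h
      simpa using this
  refine key.trans ?_
  rw [ncard_prod']
  apply Nat.mul_le_mul_right
  rw [Set.ncard_diff_singleton_of_mem (by simp [hm]),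
    ncard_length_eq']

lemma A_bound (hu : u ≠ []) (n : ℕ) :
    (A u n).ncard ≤ (r ^ u.length - 1) ^ (n / u.length) * r ^ (n % u.length) := by
  have hpos : 0 < u.length := List.length_pos_iff.mpr hu
  induction n using Nat.strong_induction_on with
  | _ n ih =>
    rcases lt_or_ge n u.length with hlt | hle
    · rw [Nat.div_eq_of_lt hlt, Nat.mod_eq_of_lt hlt, pow_zero, one_mul]
      exact A_card_le_pow u n
    · have h1 : n / u.length = (n - u.length) / u.length + 1 := by
        rw [Nat.div_eq_sub_div hpos hle]
      have h2 : n % u.length = (n - u.length) % u.length := by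
        conv_lhs => rw [← Nat.sub_add_cancel hle, Nat.add_mod_right]
      calc (A u n).ncard ≤ (r ^ u.length - 1) * (A u (n - u.length)).ncard := A_step u n hle
        _ ≤ (r ^ u.length - 1) * ((r ^ u.length - 1) ^ ((n - u.length) / u.length) * r ^ ((n - u.length) % u.length)) := by
            exact Nat.mul_le_mul_left _ (ih _ (by omega))
        _ = (r ^ u.length - 1) ^ (n / u.length) * r ^ (n % u.length) := by
            rw [h1, h2, pow_succ]; ring
end

lemma A_real_bound {r : ℕ} (hr : 1 < r) (u : List (Fin r)) (hu : u ≠ []) (n : ℕ) :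
    ((A u n).ncard : ℝ) ≤
      (r:ℝ)^(u.length - 1) * (((r:ℝ)^u.length - 1) ^ ((1:ℝ)/u.length))^n := by
  set m := u.length with hmdef
  have hm1 : 1 ≤ m := List.length_pos_iff.mpr hu
  have hR : (2:ℝ) ≤ (r:ℝ) := by exact_mod_cast (show 2 ≤ r from hr)
  have hRm : (2:ℝ) ≤ (r:ℝ)^m := le_trans hR (le_self_pow₀ (by linarith) (by omega))
  have hb1 : (1:ℝ) ≤ (r:ℝ)^m - 1 := by linarith
  have hb0 : (0:ℝ) < (r:ℝ)^m - 1 := by linarith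
  have hcast : ((A u n).ncard : ℝ) ≤ ((r:ℝ)^m - 1)^(n/m) * (r:ℝ)^(n % m) := by
    have h := A_bound u hu n
    have h1 : 1 ≤ r^m := Nat.one_le_pow _ _ (by omega)
    calc ((A u n).ncard : ℝ) ≤ (((r ^ m - 1) ^ (n / m) * r ^ (n % m) : ℕ) : ℝ) := by
          exact_mod_cast h
      _ = ((r:ℝ)^m - 1)^(n/m) * (r:ℝ)^(n % m) := by
          rw [Nat.cast_mul, Nat.cast_pow, Nat.cast_pow, Nat.cast_sub h1, Nat.cast_pow,
            Nat.cast_one]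
  refine hcast.trans ?_
  have hlam : (((r:ℝ)^m - 1) ^ ((1:ℝ)/m))^n = ((r:ℝ)^m - 1) ^ ((n:ℝ)/m) := by
    rw [← Real.rpow_natCast (((r:ℝ)^m - 1) ^ ((1:ℝ)/m)) n, ← Real.rpow_mul hb0.le]
    congr 1
    field_simp
  rw [hlam]
  have hsplit : ((n:ℝ)/m) = ((n/m : ℕ) : ℝ) + ((n % m : ℕ):ℝ)/m := by
    have hm0 : (m:ℝ) ≠ 0 := by positivity
    have h : (n:ℝ) = ((n/m:ℕ):ℝ) * m + ((n%m:ℕ):ℝ) := by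
      have hnat : n = n / m * m + n % m := (Nat.div_add_mod' n m).symm
      exact_mod_cast hnat
    rw [h, add_div, mul_div_cancel_right₀ _ hm0]
  rw [hsplit, Real.rpow_add hb0, Real.rpow_natCast]
  have h1 : (r:ℝ)^(n % m) ≤ (r:ℝ)^(m-1) :=
    pow_le_pow_right₀ (by linarith) (by have := Nat.mod_lt n (show 0 < m by omega); omega)
  have h2 : (1:ℝ) ≤ ((r:ℝ)^m - 1) ^ (((n % m : ℕ):ℝ)/m) :=
    Real.one_le_rpow hb1 (by positivity)
  have h3 : (r:ℝ)^(n % m) ≤ (r:ℝ)^(m-1) * ((r:ℝ)^m - 1) ^ (((n % m : ℕ):ℝ)/m) := by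
    calc (r:ℝ)^(n % m) ≤ (r:ℝ)^(m-1) := h1
      _ = (r:ℝ)^(m-1) * 1 := by ring
      _ ≤ _ := by
          apply mul_le_mul_of_nonneg_left h2 (by positivity)
  calc ((r:ℝ)^m - 1)^(n/m) * (r:ℝ)^(n % m)
      ≤ ((r:ℝ)^m - 1)^(n/m) * ((r:ℝ)^(m-1) * ((r:ℝ)^m - 1) ^ (((n % m : ℕ):ℝ)/m)) :=
        mul_le_mul_of_nonneg_left h3 (by positivity)
    _ = _ := by ring

lemma S_union {r : ℕ} (u : List (Fin r)) (n : ℕ) :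
    ({w : List (Fin r) | w.length ≤ n ∧ ¬ u <:+: w}).ncard ≤
      ∑ k ∈ Finset.range (n+1), (A u k).ncard := by
  induction n with
  | zero =>
    rw [Finset.sum_range_one]
    exact Set.ncard_le_ncard (fun w hw => ⟨Nat.le_zero.mp hw.1, hw.2⟩) (A_finite u 0)
  | succ n ih =>
    have hset : {w : List (Fin r) | w.length ≤ n+1 ∧ ¬ u <:+: w} =
        {w : List (Fin r) | w.length ≤ n ∧ ¬ u <:+: w} ∪ A u (n+1) := by
      ext w
      simp only [Set.mem_setOf_eq, Set.mem_union, A]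
      constructor
      · rintro ⟨h1, h2⟩
        rcases eq_or_lt_of_le h1 with h | h
        · exact Or.inr ⟨h, h2⟩
        · exact Or.inl ⟨by omega, h2⟩
      · rintro (⟨h1, h2⟩ | ⟨h1, h2⟩)
        · exact ⟨by omega, h2⟩
        · exact ⟨by omega, h2⟩
    rw [hset, Finset.sum_range_succ]
    exact le_trans (Set.ncard_union_le _ _) (by omega)


/-- Avoiding a fixed nonempty subword forces exponentially smaller growth: if `u` is a
nonempty word of length `m` over an alphabet of size `r > 1`, then the number of words of
length at most `n` avoiding `u` as a contiguous subword is at most `C(r-ε)ⁿ` for some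
`C, ε > 0`; in particular, counting words of a given length, one may take `C = r^(m-1)`
and `r - ε = (r^m - 1)^(1/m)`. -/
theorem subword_avoiding_count (r : ℕ) (hr : 1 < r) (u : List (Fin r)) (hu : u ≠ [])
    (m : ℕ) (hm : m = u.length) :
    (∃ C ε : ℝ, 0 < C ∧ 0 < ε ∧ ε < r ∧ ∀ n : ℕ, 1 ≤ n →
      ({w : List (Fin r) | w.length ≤ n ∧ ¬ u <:+: w}.ncard : ℝ) ≤ C * ((r : ℝ) - ε) ^ n) ∧
    (∀ n : ℕ, 1 ≤ n →
      ({w : List (Fin r) | w.length = n ∧ ¬ u <:+: w}.ncard : ℝ)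
        ≤ (r : ℝ) ^ (m - 1) * (((r : ℝ) ^ m - 1) ^ ((1 : ℝ) / m)) ^ n) := by
  subst hm
  set m := u.length with hmdef
  have hm1 : 1 ≤ m := List.length_pos_iff.mpr hu
  have hR : (2:ℝ) ≤ (r:ℝ) := by exact_mod_cast (show 2 ≤ r from hr)
  have hRm : (2:ℝ) ≤ (r:ℝ)^m := le_trans hR (le_self_pow₀ (by linarith) (by omega))
  have hb1 : (1:ℝ) ≤ (r:ℝ)^m - 1 := by linarith
  have hb0 : (0:ℝ) < (r:ℝ)^m - 1 := by linarith
  set lam : ℝ := ((r:ℝ)^m - 1) ^ ((1:ℝ)/m) with hlamdef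
  have hlam1 : 1 ≤ lam := Real.one_le_rpow hb1 (by positivity)
  have hlamR : lam < (r:ℝ) := by
    have h5 : ((r:ℝ)^m) ^ ((1:ℝ)/m) = (r:ℝ) := by
      rw [← Real.rpow_natCast (r:ℝ) m, ← Real.rpow_mul (by linarith), mul_one_div,
        div_self (by positivity : (m:ℝ) ≠ 0), Real.rpow_one]
    calc lam < ((r:ℝ)^m) ^ ((1:ℝ)/m) :=
          Real.rpow_lt_rpow (by linarith) (by linarith) (by positivity)
      _ = (r:ℝ) := h5
  constructor
  · -- part 1
    set d : ℝ := (((r:ℝ) - lam)/2) / lam with hddef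
    have hd : 0 < d := by
      apply div_pos (by linarith) (by linarith)
    set ε : ℝ := ((r:ℝ) - lam)/2 with hεdef
    have hd1 : (0:ℝ) < 1 + 1/d := by
      have := one_div_pos.mpr hd
      linarith
    refine ⟨(r:ℝ)^(m-1) * (1 + 1/d), ε, mul_pos (by positivity) hd1, by rw [hεdef]; linarith, by rw [hεdef]; linarith, ?_⟩
    intro n _
    have hlam0 : lam ≠ 0 := by linarith
    have hL : (1+d)*lam = (r:ℝ) - ε := by
      rw [hddef, hεdef]
      field_simp
      ring
    have hs : ({w : List (Fin r) | w.length ≤ n ∧ ¬ u <:+: w}.ncard : ℝ) ≤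
        ∑ k ∈ Finset.range (n+1), ((A u k).ncard : ℝ) := by
      exact_mod_cast S_union u n
    have hs2 : ∑ k ∈ Finset.range (n+1), ((A u k).ncard : ℝ) ≤
        ((n:ℝ)+1) * ((r:ℝ)^(m-1) * lam^n) := by
      calc ∑ k ∈ Finset.range (n+1), ((A u k).ncard : ℝ)
          ≤ ∑ _k ∈ Finset.range (n+1), (r:ℝ)^(m-1) * lam^n := by
            apply Finset.sum_le_sum
            intro k hk
            refine (A_real_bound hr u hu k).trans ?_
            exact mul_le_mul_of_nonneg_left
              (pow_le_pow_right₀ hlam1 (by simp at hk; omega)) (by positivity)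
        _ = ((n:ℝ)+1) * ((r:ℝ)^(m-1) * lam^n) := by
            rw [Finset.sum_const, Finset.card_range, nsmul_eq_mul]
            push_cast
            ring
    have hn1 : ((n:ℝ)+1) ≤ (1+1/d)*(1+d)^n := by
      have e1 : (1+1/d)*(1+d)^n = (1+d)^(n+1)/d := by
        field_simp [pow_succ]
        ring
      rw [e1, le_div_iff₀ hd]
      have hpow := one_add_mul_le_pow (show (-2:ℝ) ≤ d by linarith) (n+1)
      push_cast at hpow
      nlinarith [hd]
    calc ({w : List (Fin r) | w.length ≤ n ∧ ¬ u <:+: w}.ncard : ℝ)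
        ≤ ((n:ℝ)+1) * ((r:ℝ)^(m-1) * lam^n) := hs.trans hs2
      _ ≤ ((1+1/d)*(1+d)^n) * ((r:ℝ)^(m-1) * lam^n) :=
          mul_le_mul_of_nonneg_right hn1 (by positivity)
      _ = ((r:ℝ)^(m-1) * (1 + 1/d)) * (((1+d)*lam))^n := by
          rw [mul_pow]; ring
      _ = ((r:ℝ)^(m-1) * (1 + 1/d)) * ((r:ℝ) - ε)^n := by rw [hL]
  · intro n _
    exact A_real_bound hr u hu n
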